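/- For all spins S_X, S_Y, S_Z ∈ {−1, 1}, letting φ_j = π(1 − S_j)/2 for j ∈ {X, Y, Z}, the complex clause energy Z_1(φ_X, φ_Y, φ_Z) is real and equals H_1(S) = 1 + S_X S_Y + S_X S_Z + S_Y S_Z − (S_X + S_Y + S_Z) − S_X S_Y S_Z. Moreover H_1(S) = 0 if S_X = 1 or S_Y = 1 or S_Z = 1 (i.e., the clause X ∨ Y ∨ Z is satisfied, with S = +1 meaning TRUE), and H_1(S) = 8 otherwise. -/
import Mathlib


/-- Complex clause energy Z_1 for the corresponding 3-SAT clause type. -/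
noncomputable def Zclause1 (x y z : ℝ) : ℂ :=
  1
    + Complex.exp (Complex.I * ((x : ℂ) - (y : ℂ)))
    + Complex.exp (Complex.I * ((x : ℂ) - (z : ℂ)))
    + Complex.exp (Complex.I * ((z : ℂ) - (y : ℂ)))
    - Complex.exp (Complex.I * (x : ℂ))
    - Complex.exp (Complex.I * (y : ℂ))
    - Complex.exp (Complex.I * (z : ℂ))
    - Complex.exp (Complex.I * ((x : ℂ) - (y : ℂ) + (z : ℂ)))

/-- Ising clause energy H_1. -/
noncomputable def Hclause1 (SX SY SZ : ℝ) : ℝ :=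
  1 + SX*SY + SX*SZ + SY*SZ - (SX + SY + SZ) - SX*SY*SZ

lemma expI (a : ℝ) (n : ℤ) (h : a = n * Real.pi) :
    Complex.exp (Complex.I * (a : ℂ)) = (-1 : ℂ)^n := by
  subst h
  push_cast
  rw [show Complex.I * ((n:ℂ) * Real.pi) = (n:ℂ) * (Real.pi * Complex.I) by ring,
    Complex.exp_int_mul, Complex.exp_pi_mul_I]

lemma Zint (a b c : ℤ) :
    Zclause1 ((a:ℝ)*Real.pi) ((b:ℝ)*Real.pi) ((c:ℝ)*Real.pi)
      = 1 + (-1:ℂ)^(a-b) + (-1)^(a-c) + (-1)^(c-b)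
        - (-1)^a - (-1)^b - (-1)^c - (-1)^(a-b+c) := by
  simp only [Zclause1, ← Complex.ofReal_sub, ← Complex.ofReal_add]
  rw [expI _ (a-b) (by push_cast; ring), expI _ (a-c) (by push_cast; ring),
    expI _ (c-b) (by push_cast; ring), expI _ a (by ring),
    expI _ b (by ring), expI _ c (by ring),
    expI _ (a-b+c) (by push_cast; ring)]

/-- for binary spins, with binary phases φ_j = π(1-S_j)/2, the complex
clause energy Z_1 is real and equals H_1(S); moreover H_1(S) = 0 iff the clause is
satisfied (S = +1 meaning TRUE), and H_1(S) = 8 otherwise. -/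
theorem clause1_energy_eq_ising (SX SY SZ : ℝ)
    (hX : SX = 1 ∨ SX = -1) (hY : SY = 1 ∨ SY = -1) (hZ : SZ = 1 ∨ SZ = -1) :
    Zclause1 (Real.pi * (1 - SX) / 2) (Real.pi * (1 - SY) / 2) (Real.pi * (1 - SZ) / 2)
        = ((Hclause1 SX SY SZ : ℝ) : ℂ) ∧
      ((SX = 1 ∨ SY = 1 ∨ SZ = 1) → Hclause1 SX SY SZ = 0) ∧
      (¬ (SX = 1 ∨ SY = 1 ∨ SZ = 1) → Hclause1 SX SY SZ = 8) := by
  have e0 : Real.pi * (1 - (1:ℝ)) / 2 = ((0:ℤ):ℝ) * Real.pi := by push_cast; ring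
  have e1 : Real.pi * (1 - (-1:ℝ)) / 2 = ((1:ℤ):ℝ) * Real.pi := by push_cast; ring
  rcases hX with rfl|rfl <;> rcases hY with rfl|rfl <;> rcases hZ with rfl|rfl <;>
    refine ⟨?_, by norm_num [Hclause1], by norm_num [Hclause1]⟩ <;>
    · simp only [e0, e1]
      rw [Zint]
      norm_num [Hclause1]
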